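/- Assume the closed-loop system is exponentially stable. Then the controller solves the output regulation problem if and only if the discrete-time regulator equations have a solution, i.e. there exists a bounded linear operator Σ : ℂ^q → X × Z such that Σ S = A_e Σ + B_e and C_e Σ + D_e = 0. -/

import Mathlib

noncomputable section

open ContinuousLinearMap

variable {X Z U Ud Y W : Type*}
  [NormedAddCommGroup X] [NormedSpace ℂ X]
  [NormedAddCommGroup Z] [NormedSpace ℂ Z]
  [NormedAddCommGroup U] [NormedSpace ℂ U]
  [NormedAddCommGroup Ud] [NormedSpace ℂ Ud]
  [NormedAddCommGroup Y] [NormedSpace ℂ Y]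
  [NormedAddCommGroup W] [NormedSpace ℂ W]

/-- The closed-loop system operator `A_e` on `X × Z`:
`A_e(x,z) = (Ax + BKz, G₂Cx + G₁z + G₂DKz)`. -/
def Ae (A : X →L[ℂ] X) (B : U →L[ℂ] X) (C : X →L[ℂ] Y) (D : U →L[ℂ] Y)
    (G₁ : Z →L[ℂ] Z) (G₂ : Y →L[ℂ] Z) (K : Z →L[ℂ] U) : (X × Z) →L[ℂ] (X × Z) :=
  ((A.comp (fst ℂ X Z)) + ((B.comp K).comp (snd ℂ X Z))).prod
    ((G₂.comp (C.comp (fst ℂ X Z))) + (G₁.comp (snd ℂ X Z))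
      + ((G₂.comp (D.comp K)).comp (snd ℂ X Z)))

/-- The closed-loop input operator `B_e v = (B_d E v, G₂(D_d E v + F v))`. -/
def Be (Bd : Ud →L[ℂ] X) (Dd : Ud →L[ℂ] Y) (E : W →L[ℂ] Ud) (F : W →L[ℂ] Y)
    (G₂ : Y →L[ℂ] Z) : W →L[ℂ] (X × Z) :=
  (Bd.comp E).prod (G₂.comp ((Dd.comp E) + F))

/-- The closed-loop output operator `C_e(x,z) = Cx + DKz`. -/
def Ce (C : X →L[ℂ] Y) (D : U →L[ℂ] Y) (K : Z →L[ℂ] U) : (X × Z) →L[ℂ] Y :=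
  C.comp (fst ℂ X Z) + (D.comp K).comp (snd ℂ X Z)

/-- The closed-loop feedthrough operator `D_e = D_d E + F`. -/
def De (Dd : Ud →L[ℂ] Y) (E : W →L[ℂ] Ud) (F : W →L[ℂ] Y) : W →L[ℂ] Y :=
  (Dd.comp E) + F

/-- The controller `(G₁, G₂, K)` solves the output regulation problem: the closed-loop
system is exponentially stable and the regulation error decays at a uniform exponential
rate for all initial states of the system, the controller and the exosystem. -/
def SolvesORP (A : X →L[ℂ] X) (B : U →L[ℂ] X) (Bd : Ud →L[ℂ] X)
    (C : X →L[ℂ] Y) (D : U →L[ℂ] Y) (Dd : Ud →L[ℂ] Y)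
    (S : W →L[ℂ] W) (E : W →L[ℂ] Ud) (F : W →L[ℂ] Y)
    (G₁ : Z →L[ℂ] Z) (G₂ : Y →L[ℂ] Z) (K : Z →L[ℂ] U) : Prop :=
  (∀ lam ∈ spectrum ℂ (Ae A B C D G₁ G₂ K), ‖lam‖ < 1) ∧
  ∃ M α : ℝ, 0 < M ∧ 0 < α ∧
    ∀ (x₀ : X) (z₀ : Z) (v₀ : W) (v : ℕ → W) (xe : ℕ → X × Z),
      v 0 = v₀ → (∀ n, v (n + 1) = S (v n)) →
      xe 0 = (x₀, z₀) →
      (∀ n, xe (n + 1) = Ae A B C D G₁ G₂ K (xe n) + Be Bd Dd E F G₂ (v n)) →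
      ∀ n : ℕ, ‖Ce C D K (xe n) + De Dd E F (v n)‖
        ≤ M * Real.exp (-(α * n)) * (‖x₀‖ + ‖z₀‖ + ‖v₀‖)

/-- The controller `(G₁, G₂, K)` solves the robust output regulation problem: it solves
the output regulation problem and retains exponential decay of the regulation error for
every perturbation of the operators `(A, B, B_d, C, D, D_d, E, F)` that preserves the
exponential stability of the closed-loop system. -/
def SolvesRORP (A : X →L[ℂ] X) (B : U →L[ℂ] X) (Bd : Ud →L[ℂ] X)
    (C : X →L[ℂ] Y) (D : U →L[ℂ] Y) (Dd : Ud →L[ℂ] Y)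
    (S : W →L[ℂ] W) (E : W →L[ℂ] Ud) (F : W →L[ℂ] Y)
    (G₁ : Z →L[ℂ] Z) (G₂ : Y →L[ℂ] Z) (K : Z →L[ℂ] U) : Prop :=
  SolvesORP A B Bd C D Dd S E F G₁ G₂ K ∧
  ∀ (A' : X →L[ℂ] X) (B' : U →L[ℂ] X) (Bd' : Ud →L[ℂ] X)
    (C' : X →L[ℂ] Y) (D' : U →L[ℂ] Y) (Dd' : Ud →L[ℂ] Y)
    (E' : W →L[ℂ] Ud) (F' : W →L[ℂ] Y),
    (∀ lam ∈ spectrum ℂ (Ae A' B' C' D' G₁ G₂ K), ‖lam‖ < 1) →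
    ∃ M α : ℝ, 0 < M ∧ 0 < α ∧
      ∀ (x₀ : X) (z₀ : Z) (v₀ : W) (v : ℕ → W) (xe : ℕ → X × Z),
        v 0 = v₀ → (∀ n, v (n + 1) = S (v n)) →
        xe 0 = (x₀, z₀) →
        (∀ n, xe (n + 1) = Ae A' B' C' D' G₁ G₂ K (xe n) + Be Bd' Dd' E' F' G₂ (v n)) →
        ∀ n : ℕ, ‖Ce C' D' K (xe n) + De Dd' E' F' (v n)‖
          ≤ M * Real.exp (-(α * n)) * (‖x₀‖ + ‖z₀‖ + ‖v₀‖)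

section Aux

open Filter Topology ENNReal NNReal

lemma aux_specRadius_lt_one {EE : Type*} [NormedAddCommGroup EE] [NormedSpace ℂ EE]
    [CompleteSpace EE] (T : EE →L[ℂ] EE) (h : ∀ lam ∈ spectrum ℂ T, ‖lam‖ < 1) :
    spectralRadius ℂ T < 1 := by
  rcases subsingleton_or_nontrivial EE with hE | hE
  · haveI : Subsingleton (EE →L[ℂ] EE) :=
      ⟨fun f g => ContinuousLinearMap.ext fun x => Subsingleton.elim _ _⟩
    rw [spectrum.SpectralRadius.of_subsingleton]
    exact zero_lt_one
  · haveI : Nontrivial (EE →L[ℂ] EE) := by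
      obtain ⟨x, hx⟩ := exists_ne (0 : EE)
      exact ⟨1, 0, fun hc => hx (by simpa using congrArg (fun f : EE →L[ℂ] EE => f x) hc)⟩
    have h1 : ∀ z ∈ spectrum ℂ T, ‖z‖₊ < 1 := fun z hz => by
      have := h z hz; exact_mod_cast this
    have := spectrum.spectralRadius_lt_of_forall_lt T h1
    simpa using this

lemma aux_pow_bound {EE : Type*} [NormedAddCommGroup EE] [NormedSpace ℂ EE]
    [CompleteSpace EE] (T : EE →L[ℂ] EE) (h : ∀ lam ∈ spectrum ℂ T, ‖lam‖ < 1) :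
    ∃ M r : ℝ, 0 < M ∧ 0 < r ∧ r < 1 ∧ ∀ n : ℕ, ‖T ^ n‖ ≤ M * r ^ n := by
  obtain ⟨c, hc1, hc2⟩ := exists_between (aux_specRadius_lt_one T h)
  lift c to ℝ≥0 using hc2.ne_top
  have hc0 : (0 : ℝ≥0∞) < c := lt_of_le_of_lt zero_le hc1
  have hc0' : (0 : ℝ) < (c : ℝ) := by exact_mod_cast hc0
  have hc1' : (c : ℝ) < 1 := by exact_mod_cast hc2
  obtain ⟨N, hN⟩ := Filter.eventually_atTop.mp
    ((spectrum.pow_nnnorm_pow_one_div_tendsto_nhds_spectralRadius T).eventually_lt_const hc1)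
  set N' := max N 1 with hN'def
  have key : ∀ n, N' ≤ n → ‖T ^ n‖ ≤ (c : ℝ) ^ n := by
    intro n hn
    have hn1 : (n : ℝ) ≠ 0 := by
      have h1 : 1 ≤ n := le_trans (le_max_right _ _) hn
      have : n ≠ 0 := Nat.one_le_iff_ne_zero.mp h1
      exact_mod_cast this
    have h1 : (‖T ^ n‖₊ : ℝ≥0∞) ≤ (c : ℝ≥0∞) ^ (n : ℝ) := by
      have h2 := ENNReal.rpow_le_rpow (hN n (le_trans (le_max_left _ _) hn)).le
        (Nat.cast_nonneg n)
      rwa [← ENNReal.rpow_mul, one_div, inv_mul_cancel₀ hn1, ENNReal.rpow_one] at h2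
    rw [ENNReal.rpow_natCast, ← ENNReal.coe_pow, ENNReal.coe_le_coe] at h1
    calc ‖T ^ n‖ = ((‖T ^ n‖₊ : ℝ≥0) : ℝ) := (coe_nnnorm _).symm
      _ ≤ ((c ^ n : ℝ≥0) : ℝ) := by exact_mod_cast h1
      _ = (c : ℝ) ^ n := by push_cast; ring
  have hsum0 : 0 ≤ ∑ k ∈ Finset.range N', ‖T ^ k‖ :=
    Finset.sum_nonneg fun _ _ => norm_nonneg _
  refine ⟨(1 + ∑ k ∈ Finset.range N', ‖T ^ k‖) / (c : ℝ) ^ N', c,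
    div_pos (by linarith) (pow_pos hc0' _), hc0', hc1', ?_⟩
  have hM1 : (1 : ℝ) ≤ (1 + ∑ k ∈ Finset.range N', ‖T ^ k‖) / (c : ℝ) ^ N' := by
    rw [le_div_iff₀ (pow_pos hc0' _)]
    have := pow_le_one₀ hc0'.le hc1'.le (n := N')
    linarith
  intro n
  rcases le_or_gt N' n with hn | hn
  · calc ‖T ^ n‖ ≤ (c : ℝ) ^ n := key n hn
      _ = 1 * (c : ℝ) ^ n := (one_mul _).symm
      _ ≤ _ := mul_le_mul_of_nonneg_right hM1 (pow_nonneg hc0'.le n)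
  · have h1 : ‖T ^ n‖ ≤ ∑ k ∈ Finset.range N', ‖T ^ k‖ :=
      Finset.single_le_sum (f := fun k => ‖T ^ k‖) (fun _ _ => norm_nonneg _)
        (Finset.mem_range.mpr hn)
    rw [div_mul_eq_mul_div, le_div_iff₀ (pow_pos hc0' _)]
    have h2 : (c : ℝ) ^ N' ≤ (c : ℝ) ^ n := pow_le_pow_of_le_one hc0'.le hc1'.le hn.le
    nlinarith [pow_nonneg hc0'.le n, pow_nonneg hc0'.le N', norm_nonneg (T ^ n)]

lemma aux_sum_single {q : ℕ} (vv : Fin q → ℂ) :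
    ∑ k, vv k • (Pi.single k 1 : Fin q → ℂ) = vv := by
  funext j
  rw [Finset.sum_apply]
  simp [Pi.single_apply]

lemma aux_exists_sigma {q : ℕ} {EE : Type*} [NormedAddCommGroup EE] [NormedSpace ℂ EE]
    (T : EE →L[ℂ] EE) (Bop : (Fin q → ℂ) →L[ℂ] EE) (μ : Fin q → ℂ)
    (hunit : ∀ k, IsUnit (algebraMap ℂ (EE →L[ℂ] EE) (μ k) - T)) :
    ∃ Sig : (Fin q → ℂ) →L[ℂ] EE,
      Sig.comp (ContinuousLinearMap.pi fun k => μ k • ContinuousLinearMap.proj k)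
        = T.comp Sig + Bop := by
  have hw : ∀ k, ∃ wk : EE, μ k • wk - T wk = Bop (Pi.single k 1) := by
    intro k
    refine ⟨(((hunit k).unit⁻¹ : (EE →L[ℂ] EE)ˣ) : EE →L[ℂ] EE) (Bop (Pi.single k 1)), ?_⟩
    have h1 := congrArg (fun Tm : EE →L[ℂ] EE => Tm (Bop (Pi.single k 1)))
      (hunit k).unit.mul_inv
    simp only [ContinuousLinearMap.mul_apply, ContinuousLinearMap.one_apply] at h1
    rw [IsUnit.unit_spec] at h1
    simp only [ContinuousLinearMap.sub_apply, Algebra.algebraMap_eq_smul_one,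
      ContinuousLinearMap.smul_apply, ContinuousLinearMap.one_apply] at h1
    exact h1
  choose w hw using hw
  refine ⟨∑ k, (ContinuousLinearMap.proj k : (Fin q → ℂ) →L[ℂ] ℂ).smulRight (w k), ?_⟩
  refine ContinuousLinearMap.ext fun vv => ?_
  have hApp : ∀ u : Fin q → ℂ,
      (∑ k, (ContinuousLinearMap.proj k : (Fin q → ℂ) →L[ℂ] ℂ).smulRight (w k)) u
        = ∑ k, u k • w k := by
    intro u
    simp [ContinuousLinearMap.sum_apply, ContinuousLinearMap.smulRight_apply,
      ContinuousLinearMap.proj_apply]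
  rw [ContinuousLinearMap.comp_apply, ContinuousLinearMap.add_apply,
    ContinuousLinearMap.comp_apply, hApp, hApp]
  have hBop : Bop vv = ∑ k, vv k • Bop (Pi.single k 1) := by
    conv_lhs => rw [← aux_sum_single vv]
    rw [map_sum]
    simp
  rw [hBop, map_sum, ← Finset.sum_add_distrib]
  refine Finset.sum_congr rfl fun k _ => ?_
  have hpik : (ContinuousLinearMap.pi fun k => μ k • ContinuousLinearMap.proj k :
      (Fin q → ℂ) →L[ℂ] (Fin q → ℂ)) vv k = μ k * vv k := by
    simp [ContinuousLinearMap.proj_apply, smul_eq_mul]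
  rw [hpik, map_smul, ← hw k, smul_sub, smul_smul, mul_comm (vv k) (μ k)]
  abel

end Aux

set_option maxHeartbeats 1000000 in
/-- With an exponentially stable closed-loop system, the controller solves
the output regulation problem iff the discrete-time regulator equations
`Σ S = A_e Σ + B_e`, `C_e Σ + D_e = 0` have a bounded solution `Σ : ℂ^q → X × Z`. -/
theorem orp_iff_regulator_equations
    {X Z U Ud Y : Type*}
    [NormedAddCommGroup X] [NormedSpace ℂ X] [CompleteSpace X]
    [NormedAddCommGroup Z] [NormedSpace ℂ Z] [CompleteSpace Z]
    [NormedAddCommGroup U] [InnerProductSpace ℂ U] [CompleteSpace U]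
    [NormedAddCommGroup Ud] [InnerProductSpace ℂ Ud] [CompleteSpace Ud]
    [NormedAddCommGroup Y] [InnerProductSpace ℂ Y] [CompleteSpace Y]
    (A : X →L[ℂ] X) (B : U →L[ℂ] X) (Bd : Ud →L[ℂ] X)
    (C : X →L[ℂ] Y) (D : U →L[ℂ] Y) (Dd : Ud →L[ℂ] Y)
    (q : ℕ) (μ : Fin q → ℂ) (hμ : ∀ k, ‖μ k‖ = 1)
    (E : (Fin q → ℂ) →L[ℂ] Ud) (F : (Fin q → ℂ) →L[ℂ] Y)
    (G₁ : Z →L[ℂ] Z) (G₂ : Y →L[ℂ] Z) (K : Z →L[ℂ] U)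
    (hCL : ∀ lam ∈ spectrum ℂ (Ae A B C D G₁ G₂ K), ‖lam‖ < 1) :
    SolvesORP A B Bd C D Dd
        (ContinuousLinearMap.pi fun k => μ k • ContinuousLinearMap.proj k) E F G₁ G₂ K
      ↔ ∃ Sig : (Fin q → ℂ) →L[ℂ] X × Z,
          Sig.comp (ContinuousLinearMap.pi fun k => μ k • ContinuousLinearMap.proj k)
              = (Ae A B C D G₁ G₂ K).comp Sig + Be Bd Dd E F G₂
          ∧ (Ce C D K).comp Sig + De Dd E F = 0 := by
  classical
  set Sop : (Fin q → ℂ) →L[ℂ] (Fin q → ℂ) :=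
    ContinuousLinearMap.pi fun k => μ k • ContinuousLinearMap.proj k with hSopdef
  have hunit : ∀ k, IsUnit (algebraMap ℂ ((X × Z) →L[ℂ] (X × Z)) (μ k)
      - Ae A B C D G₁ G₂ K) := by
    intro k
    refine spectrum.notMem_iff.mp fun hk => ?_
    have h1 := hCL _ hk
    rw [hμ k] at h1
    exact lt_irrefl _ h1
  obtain ⟨Sg0, heq1⟩ := aux_exists_sigma (Ae A B C D G₁ G₂ K) (Be Bd Dd E F G₂) μ hunit
  have hSop_apply : ∀ (u : Fin q → ℂ) (j : Fin q), Sop u j = μ j * u j := by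
    intro u j
    simp [hSopdef, ContinuousLinearMap.proj_apply, smul_eq_mul]
  constructor
  · intro hORP
    unfold SolvesORP at hORP
    obtain ⟨-, M', α, hM', hα, hb⟩ := hORP
    refine ⟨Sg0, heq1, ?_⟩
    have hc0 : ∀ k : Fin q, ((Ce C D K).comp Sg0 + De Dd E F) (Pi.single k 1) = 0 := by
      intro k
      set c := ((Ce C D K).comp Sg0 + De Dd E F) (Pi.single k 1) with hcdef
      set v : ℕ → (Fin q → ℂ) := fun n => μ k ^ n • (Pi.single k 1 : Fin q → ℂ) with hvdef
      have hv0 : v 0 = Pi.single k 1 := by simp [hvdef]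
      have hvrec : ∀ n, v (n + 1) = Sop (v n) := by
        intro n
        funext j
        rw [hSop_apply]
        rcases eq_or_ne j k with hj | hj
        · subst hj
          simp only [hvdef, Pi.smul_apply, Pi.single_apply, if_pos rfl, smul_eq_mul,
            mul_one, pow_succ]
          ring
        · simp [hvdef, Pi.single_apply, hj]
      have hxerec : ∀ n, Sg0 (v (n + 1))
          = Ae A B C D G₁ G₂ K (Sg0 (v n)) + Be Bd Dd E F G₂ (v n) := by
        intro n
        have h1 := congrArg (fun Tm : (Fin q → ℂ) →L[ℂ] X × Z => Tm (v n)) heq1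
        simp only [ContinuousLinearMap.comp_apply, ContinuousLinearMap.add_apply] at h1
        rw [hvrec n]
        exact h1
      have hbd := hb (Sg0 (Pi.single k 1)).1 (Sg0 (Pi.single k 1)).2 (Pi.single k 1)
        v (fun n => Sg0 (v n)) hv0 hvrec (by simp [hv0]) hxerec
      set R : ℝ := ‖(Sg0 (Pi.single k 1)).1‖ + ‖(Sg0 (Pi.single k 1)).2‖
        + ‖(Pi.single k 1 : Fin q → ℂ)‖ with hRdef
      have hkey : ∀ n : ℕ, ‖c‖ ≤ M' * Real.exp (-(α * n)) * R := by
        intro n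
        have h2 := hbd n
        have h3 : Ce C D K (Sg0 (v n)) + De Dd E F (v n) = μ k ^ n • c := by
          rw [hcdef]
          simp only [hvdef, map_smul, ContinuousLinearMap.add_apply,
            ContinuousLinearMap.comp_apply, smul_add]
        simp only [h3] at h2
        rwa [norm_smul, norm_pow, hμ k, one_pow, one_mul] at h2
      have hlim : Filter.Tendsto (fun n : ℕ => M' * Real.exp (-(α * n)) * R)
          Filter.atTop (nhds 0) := by
        have h1 : Filter.Tendsto (fun n : ℕ => Real.exp (-α) ^ n) Filter.atTop (nhds 0) :=
          tendsto_pow_atTop_nhds_zero_of_lt_one (Real.exp_pos _).le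
            (Real.exp_lt_one_iff.mpr (by linarith))
        have h2 : (fun n : ℕ => M' * Real.exp (-(α * n)) * R)
            = fun n : ℕ => (M' * R) * Real.exp (-α) ^ n := by
          funext n
          rw [show -(α * (n : ℝ)) = (n : ℝ) * (-α) by ring, Real.exp_nat_mul]
          ring
        rw [h2]
        simpa using h1.const_mul (M' * R)
      have hle : ‖c‖ ≤ 0 := ge_of_tendsto' hlim hkey
      exact norm_le_zero_iff.mp hle
    refine ContinuousLinearMap.ext fun vv => ?_
    have h1 : ((Ce C D K).comp Sg0 + De Dd E F) vv
        = ∑ k, vv k • (((Ce C D K).comp Sg0 + De Dd E F) (Pi.single k 1)) := by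
      conv_lhs => rw [← aux_sum_single vv]
      rw [map_sum]
      simp
    rw [h1]
    simp [hc0]
  · rintro ⟨Sig, h1, h2⟩
    obtain ⟨M, r, hM, hr0, hr1, hpow⟩ := aux_pow_bound (Ae A B C D G₁ G₂ K) hCL
    unfold SolvesORP
    refine ⟨hCL, M * (‖Ce C D K‖ + 1) * (‖Sig‖ + 1), -Real.log r,
      mul_pos (mul_pos hM (by positivity)) (by positivity),
      neg_pos.mpr (Real.log_neg hr0 hr1), ?_⟩
    intro x₀ z₀ v₀ v xe hv0 hvrec hxe0 hxerec n
    have hSig : ∀ u, Sig (Sop u)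
        = Ae A B C D G₁ G₂ K (Sig u) + Be Bd Dd E F G₂ u := by
      intro u
      have h3 := congrArg (fun Tm : (Fin q → ℂ) →L[ℂ] X × Z => Tm u) h1
      simpa using h3
    have hdiff : ∀ m, xe m - Sig (v m)
        = (Ae A B C D G₁ G₂ K ^ m) (((x₀, z₀) : X × Z) - Sig v₀) := by
      intro m
      induction m with
      | zero => simp [hxe0, hv0]
      | succ m ih =>
        rw [hxerec m, hvrec m, hSig (v m), pow_succ', ContinuousLinearMap.mul_apply,
          ← ih, map_sub]
        abel
    have h2u : Ce C D K (Sig (v n)) + De Dd E F (v n) = 0 := by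
      have h3 := congrArg (fun Tm : (Fin q → ℂ) →L[ℂ] Y => Tm (v n)) h2
      simpa using h3
    have herr : Ce C D K (xe n) + De Dd E F (v n)
        = Ce C D K ((Ae A B C D G₁ G₂ K ^ n) (((x₀, z₀) : X × Z) - Sig v₀)) := by
      have h4 : Ce C D K (xe n) + De Dd E F (v n)
          = (Ce C D K (xe n) - Ce C D K (Sig (v n)))
            + (Ce C D K (Sig (v n)) + De Dd E F (v n)) := by abel
      rw [h4, h2u, add_zero, ← map_sub, hdiff n]
    rw [herr]
    have hexp : Real.exp (-(-Real.log r * (n : ℝ))) = r ^ n := by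
      rw [show -(-Real.log r * (n : ℝ)) = (n : ℝ) * Real.log r by ring,
        Real.exp_nat_mul, Real.exp_log hr0]
    rw [hexp]
    have hd : ‖((x₀, z₀) : X × Z) - Sig v₀‖ ≤ (‖Sig‖ + 1) * (‖x₀‖ + ‖z₀‖ + ‖v₀‖) := by
      have e1 : ‖((x₀, z₀) : X × Z)‖ ≤ ‖x₀‖ + ‖z₀‖ := by
        rw [Prod.norm_def]
        exact max_le (le_add_of_nonneg_right (norm_nonneg _))
          (le_add_of_nonneg_left (norm_nonneg _))
      have e2 := Sig.le_opNorm v₀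
      have e3 := norm_sub_le ((x₀, z₀) : X × Z) (Sig v₀)
      have e4 : (0 : ℝ) ≤ ‖Sig‖ := norm_nonneg _
      nlinarith [norm_nonneg x₀, norm_nonneg z₀, norm_nonneg v₀,
        mul_nonneg e4 (norm_nonneg x₀), mul_nonneg e4 (norm_nonneg z₀)]
    have e5 : ‖Ce C D K ((Ae A B C D G₁ G₂ K ^ n) (((x₀, z₀) : X × Z) - Sig v₀))‖
        ≤ ‖Ce C D K‖ * (‖Ae A B C D G₁ G₂ K ^ n‖ * ‖((x₀, z₀) : X × Z) - Sig v₀‖) :=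
      (ContinuousLinearMap.le_opNorm _ _).trans
        (mul_le_mul_of_nonneg_left (ContinuousLinearMap.le_opNorm _ _) (norm_nonneg _))
    have e6 : (0 : ℝ) ≤ M * r ^ n := le_trans (norm_nonneg _) (hpow n)
    calc ‖Ce C D K ((Ae A B C D G₁ G₂ K ^ n) (((x₀, z₀) : X × Z) - Sig v₀))‖
        ≤ ‖Ce C D K‖ * (‖Ae A B C D G₁ G₂ K ^ n‖ * ‖((x₀, z₀) : X × Z) - Sig v₀‖) := e5
      _ ≤ (‖Ce C D K‖ + 1) * ((M * r ^ n) * ((‖Sig‖ + 1) * (‖x₀‖ + ‖z₀‖ + ‖v₀‖))) := by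
          have e7 : ‖Ae A B C D G₁ G₂ K ^ n‖ * ‖((x₀, z₀) : X × Z) - Sig v₀‖
              ≤ (M * r ^ n) * ((‖Sig‖ + 1) * (‖x₀‖ + ‖z₀‖ + ‖v₀‖)) :=
            mul_le_mul (hpow n) hd (norm_nonneg _) e6
          exact mul_le_mul (by linarith [norm_nonneg (Ce C D K)]) e7
            (mul_nonneg (norm_nonneg _) (norm_nonneg _))
            (by linarith [norm_nonneg (Ce C D K)])
      _ = M * (‖Ce C D K‖ + 1) * (‖Sig‖ + 1) * r ^ n * (‖x₀‖ + ‖z₀‖ + ‖v₀‖) := by ring
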